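/- arXiv:2604.21395 — 2 statements merged into one kernel-verified Lean document; each statement's English description precedes it below -/
import Mathlib

section
/- Let d_s, d_n be positive integers, let the input (s, n, ε) be distributed as the product of the standard Gaussian product measure on ℝ^{d_s} (each coordinate Gaussian with mean 0 and variance 1), the standard Gaussian product measure on ℝ^{d_n}, and the real Gaussian measure with mean 0 and variance σ_ε² ≥ 0. Let w_s ∈ ℝ^{d_s}, let w_n ∈ ℝ^{d_n} with ‖w_n‖₂ = 1, let ρ > 0, and set y = ⟨w_s, s⟩ + ρ·⟨w_n, n⟩ + ε. Then for every measurable g : ℝ^{d_s} → ℝ with g(s) square-integrable, the mean squared error satisfies E[(g(s) − y)²] ≥ ρ² + σ_ε². In particular, every predictor depending only on the signal s pays excess squared loss at least ρ² above the Bayes risk σ_ε². -/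
open MeasureTheory ProbabilityTheory
open scoped NNReal ENNReal
open Real

lemma nbel_integral_gaussianReal_eq (v : ℝ≥0) (hv : v ≠ 0) (f : ℝ → ℝ) :
    ∫ x, f x ∂gaussianReal 0 v = ∫ x, gaussianPDFReal 0 v x * f x := by
  rw [gaussianReal_of_var_ne_zero 0 hv, gaussianPDF_def]
  rw [show (fun x => ENNReal.ofReal (gaussianPDFReal 0 v x))
      = fun x => (((gaussianPDFReal 0 v x).toNNReal : ℝ≥0) : ℝ≥0∞) from rfl]
  rw [integral_withDensity_eq_integral_smul (measurable_gaussianPDFReal 0 v).real_toNNReal f]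
  congr 1; ext x
  simp [NNReal.smul_def, Real.coe_toNNReal _ (gaussianPDFReal_nonneg 0 v x)]

lemma nbel_integrable_gaussianReal_iff (v : ℝ≥0) (hv : v ≠ 0) (f : ℝ → ℝ) :
    Integrable f (gaussianReal 0 v) ↔ Integrable (fun x => gaussianPDFReal 0 v x * f x) volume := by
  rw [gaussianReal_of_var_ne_zero 0 hv, gaussianPDF_def]
  rw [show (fun x => ENNReal.ofReal (gaussianPDFReal 0 v x))
      = fun x => (((gaussianPDFReal 0 v x).toNNReal : ℝ≥0) : ℝ≥0∞) from rfl]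
  rw [integrable_withDensity_iff_integrable_smul (measurable_gaussianPDFReal 0 v).real_toNNReal]
  constructor <;> intro h <;> refine h.congr (Filter.Eventually.of_forall fun x => ?_) <;>
    simp [NNReal.smul_def, Real.coe_toNNReal _ (gaussianPDFReal_nonneg 0 v x)]

lemma nbel_integral_id_gaussianReal (v : ℝ≥0) : ∫ x, x ∂gaussianReal 0 v = 0 := by
  by_cases hv : v = 0
  · simp [hv]
  · rw [nbel_integral_gaussianReal_eq v hv]
    have hodd : ∀ x : ℝ, gaussianPDFReal 0 v (-x) * (-x) = -(gaussianPDFReal 0 v x * x) := by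
      intro x; simp only [gaussianPDFReal, neg_neg, zero_sub, sub_zero, neg_sq]; ring
    have h := integral_neg_eq_self (fun x => gaussianPDFReal 0 v x * x) (volume : Measure ℝ)
    simp_rw [hodd, integral_neg] at h
    linarith

lemma nbel_integrable_sq_gaussianReal (v : ℝ≥0) :
    Integrable (fun x : ℝ => x ^ 2) (gaussianReal 0 v) := by
  by_cases hv : v = 0
  · rw [hv, gaussianReal_zero_var]
    refine ⟨(measurable_id.pow_const 2).aestronglyMeasurable, ?_⟩
    rw [HasFiniteIntegral, lintegral_dirac' _ (by measurability)]
    exact ENNReal.coe_lt_top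
  · rw [nbel_integrable_gaussianReal_iff v hv]
    have hb : (0:ℝ) < (2 * (v:ℝ))⁻¹ := by
      have : (0:ℝ) < (v:ℝ) := lt_of_le_of_ne (v.coe_nonneg) (by exact_mod_cast (Ne.symm hv))
      positivity
    have h := (integrable_rpow_mul_exp_neg_mul_sq hb (s := 2) (by norm_num)).const_mul
      ((Real.sqrt (2 * π * v))⁻¹)
    refine h.congr (Filter.Eventually.of_forall fun x => ?_)
    have : x ^ (2:ℝ) = x ^ 2 := by
      rw [show (2:ℝ) = ((2:ℕ):ℝ) by norm_num, Real.rpow_natCast]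
    simp only [gaussianPDFReal, this]
    rw [show -(2 * (v:ℝ))⁻¹ * x ^ 2 = -(x - 0)^2 / (2 * v) by ring]
    ring

lemma nbel_integral_sq_exp (b : ℝ) (hb : 0 < b) :
    ∫ x : ℝ, x ^ 2 * rexp (-b * x ^ 2) = b ^ (-(3:ℝ)/2) * (Real.sqrt π / 2) := by
  calc ∫ x : ℝ, x ^ 2 * rexp (-b * x ^ 2)
      = ∫ x : ℝ, (fun t => t ^ 2 * rexp (-b * t ^ 2)) |x| := by
        congr 1; ext x; simp only; rw [sq_abs]
    _ = 2 * ∫ x in Set.Ioi (0:ℝ), x ^ 2 * rexp (-b * x ^ 2) := integral_comp_abs (f := fun t => t ^ 2 * rexp (-b * t ^ 2))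
    _ = 2 * ∫ x in Set.Ioi (0:ℝ), x ^ (2:ℝ) * rexp (-b * x ^ (2:ℝ)) := by
        congr 1
        refine setIntegral_congr_fun measurableSet_Ioi (fun x _ => ?_)
        rw [show (2:ℝ) = ((2:ℕ):ℝ) by norm_num, Real.rpow_natCast]
    _ = 2 * (b ^ (-((2:ℝ) + 1) / 2) * (1 / 2) * Real.Gamma (((2:ℝ) + 1) / 2)) := by
        rw [integral_rpow_mul_exp_neg_mul_rpow (by norm_num) (by norm_num) hb]
    _ = b ^ (-(3:ℝ)/2) * (Real.sqrt π / 2) := by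
        rw [show ((2:ℝ) + 1) / 2 = 1/2 + 1 by norm_num, Real.Gamma_add_one (by norm_num),
          Real.Gamma_one_half_eq]
        rw [show -((2:ℝ)+1)/2 = -(3:ℝ)/2 by norm_num]
        ring

lemma nbel_integral_sq_gaussianReal (v : ℝ≥0) : ∫ x, x ^ 2 ∂gaussianReal 0 v = v := by
  by_cases hv : v = 0
  · simp [hv]
  · have hv' : (0:ℝ) < (v:ℝ) := lt_of_le_of_ne (v.coe_nonneg) (by exact_mod_cast (Ne.symm hv))
    rw [nbel_integral_gaussianReal_eq v hv]
    have h2v : (0:ℝ) < 2 * (v:ℝ) := by positivity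
    have hb : (0:ℝ) < (2 * (v:ℝ))⁻¹ := by positivity
    have hrw : ∀ x : ℝ, gaussianPDFReal 0 v x * x ^ 2
        = (Real.sqrt (2 * π * v))⁻¹ * (x ^ 2 * rexp (-(2 * (v:ℝ))⁻¹ * x ^ 2)) := by
      intro x
      simp only [gaussianPDFReal, sub_zero]
      rw [show -(2 * (v:ℝ))⁻¹ * x ^ 2 = -x ^ 2 / (2 * v) by ring]
      ring
    simp_rw [hrw]
    rw [integral_const_mul, nbel_integral_sq_exp _ hb]
    have hsA : (0:ℝ) < Real.sqrt (2*(v:ℝ)) := Real.sqrt_pos.mpr h2v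
    have hsπ : (0:ℝ) < Real.sqrt π := Real.sqrt_pos.mpr Real.pi_pos
    rw [show (-(3:ℝ)/2) = -((3:ℝ)/2) by norm_num, Real.inv_rpow h2v.le,
      ← Real.rpow_neg h2v.le, neg_neg,
      show (2:ℝ)*π*(v:ℝ) = (2*(v:ℝ))*π by ring, Real.sqrt_mul h2v.le,
      show (3:ℝ)/2 = 1 + 1/2 by norm_num, Real.rpow_add h2v, Real.rpow_one,
      ← Real.sqrt_eq_rpow]
    rw [mul_inv]
    field_simp

lemma nbel_memℒp_id_gaussianReal (v : ℝ≥0) : MemLp (id : ℝ → ℝ) 2 (gaussianReal 0 v) :=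
  (memLp_two_iff_integrable_sq aestronglyMeasurable_id).2 (nbel_integrable_sq_gaussianReal v)

lemma nbel_map_eval_pi {k : ℕ} (m : Measure ℝ) [IsProbabilityMeasure m] (i : Fin k) :
    (Measure.pi fun _ : Fin k => m).map (Function.eval i) = m := by
  ext s hs
  rw [Measure.map_apply (measurable_pi_apply i) hs, Set.eval_preimage, Measure.pi_pi]
  calc ∏ j, m (Function.update (fun _ => Set.univ) i s j)
      = ∏ j : Fin k, (if j = i then m s else 1) := by
        refine Finset.prod_congr rfl (fun j _ => ?_)
        rw [Function.update_apply]
        split <;> simp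
    _ = m s := by rw [Finset.prod_ite_eq' Finset.univ i (fun _ => m s)]; simp

lemma nbel_memℒp_eval {k : ℕ} (m : Measure ℝ) [IsProbabilityMeasure m]
    (hm : MemLp (id : ℝ → ℝ) 2 m) (i : Fin k) :
    MemLp (fun x : Fin k → ℝ => x i) 2 (Measure.pi fun _ : Fin k => m) := by
  have h := nbel_map_eval_pi m i
  have : MemLp (id : ℝ → ℝ) 2 ((Measure.pi fun _ : Fin k => m).map (Function.eval i)) := by
    rw [h]; exact hm
  exact (memLp_map_measure_iff this.1 (measurable_pi_apply i).aemeasurable).1 this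

lemma nbel_integral_eval {k : ℕ} (m : Measure ℝ) [IsProbabilityMeasure m] (i : Fin k) :
    ∫ x, x i ∂(Measure.pi fun _ : Fin k => m) = ∫ x, x ∂m := by
  have : (∫ x, x ∂m) = ∫ x, x ∂((Measure.pi fun _ : Fin k => m).map (Function.eval i)) := by
    rw [nbel_map_eval_pi m i]
  rw [this, integral_map (measurable_pi_apply i).aemeasurable]
  rw [nbel_map_eval_pi m i]; exact aestronglyMeasurable_id

lemma nbel_integral_pi_prod {k : ℕ} (m : Measure ℝ) [IsProbabilityMeasure m]
    (f : Fin k → ℝ → ℝ) :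
    ∫ x, ∏ i, f i (x i) ∂(Measure.pi fun _ : Fin k => m) = ∏ i, ∫ x, f i x ∂m := by
  letI : MeasureSpace ℝ := ⟨m⟩
  exact MeasureTheory.integral_fintype_prod_eq_prod f

lemma nbel_integrable_mul {α : Type*} [MeasurableSpace α] {μ : Measure α} {f g : α → ℝ}
    (hf : MemLp f 2 μ) (hg : MemLp g 2 μ) : Integrable (fun x => f x * g x) μ := by
  have h : MemLp (f • g) 1 μ := (haveI : ENNReal.HolderTriple 2 2 1 := ⟨by
    rw [inv_one, ENNReal.inv_two_add_inv_two]⟩; hg.smul hf)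
  exact memLp_one_iff_integrable.1 h

lemma nbel_integral_eval_comp {k : ℕ} (m : Measure ℝ) [IsProbabilityMeasure m] (i : Fin k)
    (φ : ℝ → ℝ) (hφ : AEStronglyMeasurable φ m) :
    ∫ x, φ (x i) ∂(Measure.pi fun _ : Fin k => m) = ∫ x, φ x ∂m := by
  have h : (∫ x, φ x ∂m)
      = ∫ x, φ x ∂((Measure.pi fun _ : Fin k => m).map (Function.eval i)) := by
    rw [nbel_map_eval_pi m i]
  rw [h, integral_map (measurable_pi_apply i).aemeasurable]
  rw [nbel_map_eval_pi m i]; exact hφ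

lemma nbel_integral_eval_mul_eval {k : ℕ} (m : Measure ℝ) [IsProbabilityMeasure m]
    (h0 : ∫ x, x ∂m = 0) (i j : Fin k) :
    ∫ x, x i * x j ∂(Measure.pi fun _ : Fin k => m)
      = if i = j then ∫ x, x ^ 2 ∂m else 0 := by
  by_cases hij : i = j
  · subst hij
    simp only [if_pos rfl]
    have := nbel_integral_eval_comp m i (fun t => t * t)
      ((aestronglyMeasurable_id.mul aestronglyMeasurable_id) : AEStronglyMeasurable (fun t : ℝ => t * t) m)
    rw [this]
    congr 1; ext x; ring
  · rw [if_neg hij]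
    have key : ∀ x : Fin k → ℝ, x i * x j
        = ∏ l, ((if l = i then x l else 1) * (if l = j then x l else 1)) := by
      intro x
      rw [Finset.prod_mul_distrib, Finset.prod_ite_eq' Finset.univ i (fun l => x l),
        Finset.prod_ite_eq' Finset.univ j (fun l => x l)]
      simp
    simp_rw [key]
    rw [nbel_integral_pi_prod m (fun l t => (if l = i then t else 1) * (if l = j then t else 1))]
    refine Finset.prod_eq_zero (Finset.mem_univ i) ?_
    simp only [if_pos rfl, if_neg hij, mul_one]
    exact h0

lemma nbel_memℒp_sum {k : ℕ} (w : Fin k → ℝ) :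
    MemLp (fun x : Fin k → ℝ => ∑ i, w i * x i) 2
      (Measure.pi fun _ : Fin k => gaussianReal 0 1) := by
  refine memLp_finset_sum Finset.univ (fun i _ => ?_)
  exact (nbel_memℒp_eval _ (nbel_memℒp_id_gaussianReal 1) i).const_mul (w i)

lemma nbel_integral_sum {k : ℕ} (w : Fin k → ℝ) :
    ∫ x, (∑ i, w i * x i) ∂(Measure.pi fun _ : Fin k => gaussianReal 0 1) = 0 := by
  rw [integral_finset_sum _ (fun i _ =>
    ((nbel_memℒp_eval _ (nbel_memℒp_id_gaussianReal 1) i).const_mul (w i)).integrable one_le_two)]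
  refine Finset.sum_eq_zero (fun i _ => ?_)
  rw [integral_const_mul, nbel_integral_eval, nbel_integral_id_gaussianReal, mul_zero]

lemma nbel_integral_sum_sq {k : ℕ} (w : Fin k → ℝ) :
    ∫ x, (∑ i, w i * x i) ^ 2 ∂(Measure.pi fun _ : Fin k => gaussianReal 0 1)
      = ∑ i, w i ^ 2 := by
  have hexp : ∀ x : Fin k → ℝ,
      (∑ i, w i * x i) ^ 2 = ∑ i, ∑ j, (w i * w j) * (x i * x j) := by
    intro x
    rw [sq, Finset.sum_mul_sum]
    refine Finset.sum_congr rfl (fun i _ => Finset.sum_congr rfl (fun j _ => by ring))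
  simp_rw [hexp]
  have hint : ∀ (i j : Fin k), Integrable (fun x : Fin k → ℝ => (w i * w j) * (x i * x j))
      (Measure.pi fun _ : Fin k => gaussianReal 0 1) := fun i j =>
    (nbel_integrable_mul (nbel_memℒp_eval _ (nbel_memℒp_id_gaussianReal 1) i)
      (nbel_memℒp_eval _ (nbel_memℒp_id_gaussianReal 1) j)).const_mul _
  rw [integral_finset_sum _ (fun i _ => integrable_finset_sum _ (fun j _ => hint i j))]
  have : ∀ i : Fin k, ∫ x, (∑ j, (w i * w j) * (x i * x j))
      ∂(Measure.pi fun _ : Fin k => gaussianReal 0 1) = w i ^ 2 := by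
    intro i
    rw [integral_finset_sum _ (fun j _ => hint i j)]
    have hval : ∀ j : Fin k, ∫ x, (w i * w j) * (x i * x j)
        ∂(Measure.pi fun _ : Fin k => gaussianReal 0 1)
        = if i = j then w i ^ 2 else 0 := by
      intro j
      rw [integral_const_mul, nbel_integral_eval_mul_eval _ (nbel_integral_id_gaussianReal 1) i j,
        nbel_integral_sq_gaussianReal]
      by_cases h : i = j
      · subst h; simp [sq]
      · simp [h]
    simp_rw [hval]
    simp
  simp_rw [this]

section ProdHelpers
variable {α β : Type*} [MeasurableSpace α] [MeasurableSpace β]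
  (μ : Measure α) (ν : Measure β) [IsProbabilityMeasure μ] [IsProbabilityMeasure ν]

lemma nbel_integral_fst (f : α → ℝ) : ∫ p, f p.1 ∂(μ.prod ν) = ∫ x, f x ∂μ := by
  have h := integral_prod_mul (μ := μ) (ν := ν) f (fun _ => (1:ℝ))
  simpa using h

lemma nbel_integral_snd (f : β → ℝ) : ∫ p, f p.2 ∂(μ.prod ν) = ∫ x, f x ∂ν := by
  have h := integral_prod_mul (μ := μ) (ν := ν) (fun _ => (1:ℝ)) f
  simpa using h

lemma nbel_memℒp_fst {f : α → ℝ} (h : MemLp f 2 μ) :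
    MemLp (fun p : α × β => f p.1) 2 (μ.prod ν) := by
  have hmap : (μ.prod ν).map Prod.fst = μ := by simp
  have h' : MemLp f 2 ((μ.prod ν).map Prod.fst) := by rw [hmap]; exact h
  exact (memLp_map_measure_iff h'.1 measurable_fst.aemeasurable).1 h'

lemma nbel_memℒp_snd {f : β → ℝ} (h : MemLp f 2 ν) :
    MemLp (fun p : α × β => f p.2) 2 (μ.prod ν) := by
  have hmap : (μ.prod ν).map Prod.snd = ν := by simp
  have h' : MemLp f 2 ((μ.prod ν).map Prod.snd) := by rw [hmap]; exact h
  exact (memLp_map_measure_iff h'.1 measurable_snd.aemeasurable).1 h'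

end ProdHelpers

theorem nuisance_blind_excess_loss {ds dn : ℕ} (hds : 0 < ds) (hdn : 0 < dn)
    (w_s : Fin ds → ℝ) (w_n : Fin dn → ℝ)
    (hwn : Real.sqrt (∑ i, w_n i ^ 2) = 1)
    (ρ : ℝ) (hρ : 0 < ρ) (vε : ℝ≥0)
    (μ : Measure ((Fin ds → ℝ) × (Fin dn → ℝ) × ℝ))
    (hμ : μ = (Measure.pi fun _ : Fin ds => gaussianReal 0 1).prod
        ((Measure.pi fun _ : Fin dn => gaussianReal 0 1).prod (gaussianReal 0 vε)))
    (g : (Fin ds → ℝ) → ℝ) (hg : Measurable g)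
    (hg2 : MemLp (fun ω : (Fin ds → ℝ) × (Fin dn → ℝ) × ℝ => g ω.1) 2 μ) :
    ρ ^ 2 + (vε : ℝ) ≤
      ∫ ω, (g ω.1 -
        ((∑ i, w_s i * ω.1 i) + ρ * (∑ i, w_n i * ω.2.1 i) + ω.2.2)) ^ 2 ∂μ := by
  subst hμ
  set μs : Measure (Fin ds → ℝ) := Measure.pi fun _ : Fin ds => gaussianReal 0 1 with hμs
  set μn : Measure (Fin dn → ℝ) := Measure.pi fun _ : Fin dn => gaussianReal 0 1 with hμn
  set με : Measure ℝ := gaussianReal 0 vε with hμε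
  set ν : Measure ((Fin dn → ℝ) × ℝ) := μn.prod με with hν
  -- normalization of the nuisance weights
  have hsum1 : ∑ i, w_n i ^ 2 = 1 := by
    have hnn : (0:ℝ) ≤ ∑ i, w_n i ^ 2 := Finset.sum_nonneg fun i _ => sq_nonneg _
    have := Real.sq_sqrt hnn
    rw [hwn] at this
    simpa using this.symm
  -- the functions
  set T : (Fin dn → ℝ) → ℝ := fun n => ∑ i, w_n i * n i with hT
  set G : (Fin dn → ℝ) × ℝ → ℝ := fun p => ρ * T p.1 + p.2 with hG
  set F : (Fin ds → ℝ) → ℝ := fun s => g s - ∑ i, w_s i * s i with hF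
  -- memℒp facts
  have hTmem : MemLp T 2 μn := nbel_memℒp_sum w_n
  have hεmem : MemLp (id : ℝ → ℝ) 2 με := nbel_memℒp_id_gaussianReal vε
  have hTν : MemLp (fun p : (Fin dn → ℝ) × ℝ => T p.1) 2 ν := nbel_memℒp_fst _ _ hTmem
  have hεν : MemLp (fun p : (Fin dn → ℝ) × ℝ => p.2) 2 ν := nbel_memℒp_snd _ _ hεmem
  have hGν : MemLp G 2 ν := (hTν.const_mul ρ).add hεν
  have hmapfst : (μs.prod ν).map Prod.fst = μs := by simp
  have hgs : MemLp g 2 μs := by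
    rw [← hmapfst]
    refine (memLp_map_measure_iff ?_ measurable_fst.aemeasurable).2 hg2
    exact hg.aestronglyMeasurable
  have hFμs : MemLp F 2 μs := hgs.sub (nbel_memℒp_sum w_s)
  have hFμ : MemLp (fun ω : (Fin ds → ℝ) × (Fin dn → ℝ) × ℝ => F ω.1) 2 (μs.prod ν) :=
    nbel_memℒp_fst _ _ hFμs
  have hGμ : MemLp (fun ω : (Fin ds → ℝ) × (Fin dn → ℝ) × ℝ => G ω.2) 2 (μs.prod ν) :=
    nbel_memℒp_snd _ _ hGν
  -- integrabilities on μ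
  have IA : Integrable (fun ω : (Fin ds → ℝ) × (Fin dn → ℝ) × ℝ => (F ω.1) ^ 2) (μs.prod ν) :=
    (memLp_two_iff_integrable_sq hFμ.1).1 hFμ
  have IG2 : Integrable (fun ω : (Fin ds → ℝ) × (Fin dn → ℝ) × ℝ => (G ω.2) ^ 2) (μs.prod ν) :=
    (memLp_two_iff_integrable_sq hGμ.1).1 hGμ
  have IFG : Integrable (fun ω : (Fin ds → ℝ) × (Fin dn → ℝ) × ℝ => F ω.1 * G ω.2)
      (μs.prod ν) := nbel_integrable_mul hFμ hGμ
  -- integral of G is zero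
  have hGint : ∫ p, G p ∂ν = 0 := by
    rw [hG]
    rw [integral_add ((hTν.const_mul ρ).integrable one_le_two) (hεν.integrable one_le_two)]
    rw [integral_const_mul, nbel_integral_fst μn με T, nbel_integral_sum w_n,
      nbel_integral_snd μn με (fun x => x), nbel_integral_id_gaussianReal]
    ring
  -- integral of G^2
  have hG2int : ∫ p, (G p) ^ 2 ∂ν = ρ ^ 2 + (vε : ℝ) := by
    have hexpG : (fun p : (Fin dn → ℝ) × ℝ => (G p) ^ 2)
        = fun p => ρ ^ 2 * (T p.1) ^ 2 + ((2 * ρ) * (T p.1 * p.2) + p.2 ^ 2) := by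
      funext p; rw [hG]; ring
    have i1 : Integrable (fun p : (Fin dn → ℝ) × ℝ => ρ ^ 2 * (T p.1) ^ 2) ν :=
      ((memLp_two_iff_integrable_sq hTν.1).1 hTν).const_mul _
    have i2 : Integrable (fun p : (Fin dn → ℝ) × ℝ => (2 * ρ) * (T p.1 * p.2)) ν :=
      (nbel_integrable_mul hTν hεν).const_mul _
    have i3 : Integrable (fun p : (Fin dn → ℝ) × ℝ => p.2 ^ 2) ν :=
      (memLp_two_iff_integrable_sq hεν.1).1 hεν
    have i23 : Integrable (fun p : (Fin dn → ℝ) × ℝ => (2 * ρ) * (T p.1 * p.2) + p.2 ^ 2) ν :=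
      i2.add i3
    rw [hexpG, integral_add i1 i23, integral_add i2 i3]
    rw [integral_const_mul, nbel_integral_fst μn με (fun n => T n ^ 2), nbel_integral_sum_sq w_n,
      hsum1]
    rw [integral_const_mul, integral_prod_mul (μ := μn) (ν := με) T (fun x => x),
      nbel_integral_sum w_n]
    rw [nbel_integral_snd μn με (fun x => x ^ 2), nbel_integral_sq_gaussianReal]
    ring
  -- pointwise expansion
  have hpoint : (fun ω : (Fin ds → ℝ) × (Fin dn → ℝ) × ℝ =>
        (g ω.1 - ((∑ i, w_s i * ω.1 i) + ρ * (∑ i, w_n i * ω.2.1 i) + ω.2.2)) ^ 2)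
      = fun ω => (F ω.1) ^ 2 - ((2:ℝ) * (F ω.1 * G ω.2) - (G ω.2) ^ 2) := by
    funext ω; rw [hF, hG, hT]; ring
  rw [hpoint]
  have IB : Integrable (fun ω : (Fin ds → ℝ) × (Fin dn → ℝ) × ℝ =>
      (2:ℝ) * (F ω.1 * G ω.2) - (G ω.2) ^ 2) (μs.prod ν) := (IFG.const_mul 2).sub IG2
  rw [integral_sub IA IB, integral_sub (IFG.const_mul 2) IG2]
  rw [integral_const_mul, integral_prod_mul (μ := μs) (ν := ν) F G, hGint]
  have hsq : 0 ≤ ∫ ω : (Fin ds → ℝ) × (Fin dn → ℝ) × ℝ, (F ω.1) ^ 2 ∂(μs.prod ν) :=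
    integral_nonneg fun ω => sq_nonneg _
  have hG2' : ∫ ω : (Fin ds → ℝ) × (Fin dn → ℝ) × ℝ, (G ω.2) ^ 2 ∂(μs.prod ν)
      = ρ ^ 2 + (vε : ℝ) := by
    rw [nbel_integral_snd μs ν (fun p => G p ^ 2), hG2int]
  rw [hG2']
  linarith
end

section
/- Let φ : ℝ^d → ℝ^m be everywhere differentiable and suppose its derivative is β-Lipschitz in the sense that ‖Dφ(x) − Dφ(y)‖_F ≤ β·‖x − y‖₂ for all x, y. Fix x ∈ ℝ^d and σ > 0, let δ be distributed according to the product measure on ℝ^d with i.i.d. Gaussian coordinates of mean 0 and variance σ², and set G := ‖Dφ(x)‖_F. Then | E_δ[‖φ(x + δ) − φ(x)‖₂²] − σ²·G² | ≤ β·G·E[‖δ‖₂³] + (β²/4)·E[‖δ‖₂⁴]; in particular, since E[‖δ‖₂⁴] = d(d+2)σ⁴, the deviation of the exact embedding drift from its linearisation σ²·‖Dφ(x)‖_F² is O(σ³) with explicit constants depending only on β, G and d. -/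
open MeasureTheory ProbabilityTheory

/-- Squared Frobenius norm of a continuous linear map between Euclidean
spaces, computed in the standard orthonormal basis of the domain. -/
noncomputable def clmFrobeniusSq {d m : ℕ}
    (T : EuclideanSpace ℝ (Fin d) →L[ℝ] EuclideanSpace ℝ (Fin m)) : ℝ :=
  ∑ j : Fin d, ‖T (EuclideanSpace.single j 1)‖ ^ 2

open Real NNReal ENNReal

/-! ### One-dimensional Gaussian moment lemmas -/

section OneDim
variable {v : ℝ≥0}

lemma gaussianPDF_eq_coe (v : ℝ≥0) : gaussianPDF 0 v
    = fun x => (((gaussianPDFReal 0 v x).toNNReal : ℝ≥0) : ℝ≥0∞) := by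
  ext x; rw [gaussianPDF_def]; rfl

lemma gauss_transfer (hv : v ≠ 0) (g : ℝ → ℝ) :
    ∫ x, g x ∂(gaussianReal 0 v) = ∫ x, gaussianPDFReal 0 v x * g x := by
  rw [gaussianReal_of_var_ne_zero 0 hv, gaussianPDF_eq_coe,
    integral_withDensity_eq_integral_smul (measurable_gaussianPDFReal 0 v).real_toNNReal]
  congr 1; ext x
  rw [NNReal.smul_def, smul_eq_mul, Real.coe_toNNReal _ (gaussianPDFReal_nonneg 0 v x)]

lemma gauss_integrable_iff (hv : v ≠ 0) (g : ℝ → ℝ) :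
    Integrable g (gaussianReal 0 v) ↔
      Integrable (fun x => gaussianPDFReal 0 v x * g x) volume := by
  rw [gaussianReal_of_var_ne_zero 0 hv, gaussianPDF_eq_coe,
    integrable_withDensity_iff_integrable_smul (measurable_gaussianPDFReal 0 v).real_toNNReal]
  constructor <;> intro h <;> refine h.congr (Filter.Eventually.of_forall fun x => ?_) <;>
    · simp only [NNReal.smul_def, smul_eq_mul]
      rw [Real.coe_toNNReal _ (gaussianPDFReal_nonneg 0 v x)]

lemma integrable_abs_pow_mul_exp {b : ℝ} (hb : 0 < b) (n : ℕ) :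
    Integrable (fun x : ℝ => |x| ^ n * Real.exp (-b * x ^ 2)) volume := by
  have h := (integrable_rpow_mul_exp_neg_mul_sq hb
    (show (-1 : ℝ) < (n : ℝ) from lt_of_lt_of_le (by norm_num) (Nat.cast_nonneg n))).abs
  refine h.congr (Filter.Eventually.of_forall fun x => ?_)
  show |x ^ (n:ℝ) * rexp (-b * x ^ 2)| = _
  rw [abs_mul, Real.rpow_natCast, abs_pow, abs_of_pos (Real.exp_pos _)]

lemma pdf_mul_eq (v : ℝ≥0) (x : ℝ) (g : ℝ) :
    gaussianPDFReal 0 v x * g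
      = (Real.sqrt (2 * π * v))⁻¹ * (g * Real.exp (-(2 * (v:ℝ))⁻¹ * x ^ 2)) := by
  rw [gaussianPDFReal_def]; simp only [sub_zero]; rw [neg_div, div_eq_mul_inv]; ring_nf

lemma integrable_abs_pow_gaussian (hv : v ≠ 0) (n : ℕ) :
    Integrable (fun x => |x| ^ n) (gaussianReal 0 v) := by
  have hvpos : (0 : ℝ) < v := lt_of_le_of_ne v.coe_nonneg (by exact_mod_cast hv.symm)
  rw [gauss_integrable_iff hv]
  have hb : (0:ℝ) < (2 * (v:ℝ))⁻¹ := by positivity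
  have := ((integrable_abs_pow_mul_exp hb n).const_mul ((Real.sqrt (2 * π * v))⁻¹))
  exact this.congr (Filter.Eventually.of_forall fun x => (pdf_mul_eq v x _).symm)

lemma integrable_pow_gaussian (hv : v ≠ 0) (n : ℕ) :
    Integrable (fun x => x ^ n) (gaussianReal 0 v) := by
  refine (integrable_abs_pow_gaussian hv n).mono'
    (Measurable.aestronglyMeasurable (by measurability))
    (Filter.Eventually.of_forall fun x => ?_)
  rw [Real.norm_eq_abs, abs_pow]

lemma even_moment_core {b : ℝ} (hb : 0 < b) (q : ℕ) :
    ∫ x : ℝ, |x| ^ q * Real.exp (-b * x ^ 2)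
      = b ^ (-((q : ℝ) + 1) / 2) * (1 / 2) * Real.Gamma (((q : ℝ) + 1) / 2) * 2 := by
  have h1 : ∫ x : ℝ, |x| ^ q * Real.exp (-b * x ^ 2)
      = 2 * ∫ x in Set.Ioi (0:ℝ), x ^ q * Real.exp (-b * x ^ 2) := by
    rw [← integral_comp_abs (f := fun x => x ^ q * Real.exp (-b * x ^ 2))]
    congr 1; ext x
    rw [sq_abs]
  rw [h1]
  have h2 : ∫ x in Set.Ioi (0:ℝ), x ^ q * Real.exp (-b * x ^ 2)
      = ∫ x in Set.Ioi (0:ℝ), x ^ ((q:ℝ)) * Real.exp (-b * x ^ ((2:ℝ))) := by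
    congr 1; ext x
    rw [Real.rpow_natCast, Real.rpow_two]
  rw [h2, integral_rpow_mul_exp_neg_mul_rpow two_pos
    (lt_of_lt_of_le (by norm_num) (Nat.cast_nonneg q)) hb]
  ring

lemma gauss_even_moment (hv : v ≠ 0) (k : ℕ) :
    ∫ x, x ^ (2 * k) ∂(gaussianReal 0 v)
      = (2 * (v:ℝ)) ^ k * Real.Gamma ((((2 * k : ℕ) : ℝ) + 1) / 2) / Real.sqrt π := by
  have hw : (0:ℝ) < (v:ℝ) := lt_of_le_of_ne v.coe_nonneg (by exact_mod_cast hv.symm)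
  have h2w : (0:ℝ) < 2 * (v:ℝ) := by linarith
  have hb : (0:ℝ) < (2 * (v:ℝ))⁻¹ := by positivity
  rw [gauss_transfer hv]
  have h1 : ∀ x : ℝ, gaussianPDFReal 0 v x * x ^ (2*k)
      = (Real.sqrt (2 * π * v))⁻¹ * (|x| ^ (2*k) * Real.exp (-(2 * (v:ℝ))⁻¹ * x ^ 2)) := by
    intro x
    rw [pdf_mul_eq v x, (Even.pow_abs (by exact ⟨k, by ring⟩) x)]
  simp only [h1]
  rw [integral_const_mul, even_moment_core hb (2*k)]
  have hsqrt : Real.sqrt (2 * π * (v:ℝ)) = Real.sqrt π * Real.sqrt (2 * v) := by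
    rw [← Real.sqrt_mul Real.pi_pos.le]
    ring_nf
  rw [hsqrt]
  have e1 : ((2*(v:ℝ))⁻¹) ^ (-((((2*k : ℕ)) : ℝ) + 1) / 2)
      = (2*(v:ℝ)) ^ (((1:ℝ)/2) * (((2*k+1 : ℕ)) : ℝ)) := by
    rw [Real.inv_rpow h2w.le, ← Real.rpow_neg h2w.le]
    congr 1; push_cast; ring
  have e2 : (Real.sqrt (2*(v:ℝ))) ^ (2*k+1)
      = (2*(v:ℝ)) ^ (((1:ℝ)/2) * (((2*k+1 : ℕ)) : ℝ)) := by
    rw [Real.sqrt_eq_rpow, ← Real.rpow_natCast ((2*(v:ℝ)) ^ ((1:ℝ)/2)) (2*k+1),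
      ← Real.rpow_mul h2w.le]
  have e3 : (Real.sqrt (2*(v:ℝ))) ^ (2*k+1)
      = (2*(v:ℝ)) ^ k * Real.sqrt (2*(v:ℝ)) := by
    rw [pow_succ, pow_mul, Real.sq_sqrt h2w.le]
  rw [e1, ← e2, e3]
  have hA0 : (0:ℝ) < Real.sqrt (2*(v:ℝ)) := Real.sqrt_pos.mpr h2w
  have hB0 : (0:ℝ) < Real.sqrt π := Real.sqrt_pos.mpr Real.pi_pos
  field_simp

lemma gauss_moment_one (hv : v ≠ 0) : ∫ x, x ∂(gaussianReal 0 v) = 0 := by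
  have key : ∫ x, gaussianPDFReal 0 v x * x
      = - ∫ x, gaussianPDFReal 0 v x * x := by
    nth_rewrite 1 [← integral_neg_eq_self (fun x => gaussianPDFReal 0 v x * x) volume]
    rw [← integral_neg]
    congr 1; ext x
    rw [gaussianPDFReal_def]
    simp only [sub_zero, neg_sq]
    ring
  rw [gauss_transfer hv]
  linarith [key]

lemma gauss_moment_two (hv : v ≠ 0) : ∫ x, x ^ 2 ∂(gaussianReal 0 v) = v := by
  have h := gauss_even_moment hv 1
  norm_num at h
  rw [h]
  have hΓ : Real.Gamma ((3:ℝ)/2) = (1/2) * Real.sqrt π := by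
    rw [show (3:ℝ)/2 = 1/2 + 1 by norm_num, Real.Gamma_add_one (by norm_num),
      Real.Gamma_one_half_eq]
  have hB0 : (0:ℝ) < Real.sqrt π := Real.sqrt_pos.mpr Real.pi_pos
  rw [hΓ]
  field_simp

lemma gauss_moment_four (hv : v ≠ 0) : ∫ x, x ^ 4 ∂(gaussianReal 0 v) = 3 * (v:ℝ) ^ 2 := by
  have h := gauss_even_moment hv 2
  norm_num at h
  rw [h]
  have hΓ : Real.Gamma ((5:ℝ)/2) = (3/2) * ((1/2) * Real.sqrt π) := by
    rw [show (5:ℝ)/2 = 3/2 + 1 by norm_num, Real.Gamma_add_one (by norm_num),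
      show (3:ℝ)/2 = 1/2 + 1 by norm_num, Real.Gamma_add_one (by norm_num),
      Real.Gamma_one_half_eq]
  have hB0 : (0:ℝ) < Real.sqrt π := Real.sqrt_pos.mpr Real.pi_pos
  rw [hΓ]
  field_simp

end OneDim

/-! ### Product measure helpers -/

lemma pi_integrable_prod {d : ℕ} (ν : Measure ℝ) [SigmaFinite ν] {f : Fin d → ℝ → ℝ}
    (hf : ∀ i, Integrable (f i) ν) :
    Integrable (fun u : Fin d → ℝ => ∏ i, f i (u i)) (Measure.pi fun _ => ν) := by
  letI : MeasureSpace ℝ := ⟨ν⟩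
  exact Integrable.fintype_prod (𝕜 := ℝ) hf

lemma pi_integral_prod {d : ℕ} (ν : Measure ℝ) [SigmaFinite ν] (f : Fin d → ℝ → ℝ) :
    ∫ u : Fin d → ℝ, ∏ i, f i (u i) ∂(Measure.pi fun _ => ν) = ∏ i, ∫ x, f i x ∂ν := by
  letI : MeasureSpace ℝ := ⟨ν⟩
  exact integral_fintype_prod_eq_prod (𝕜 := ℝ) f

lemma single_coord_repr {d : ℕ} (j : Fin d) (f : ℝ → ℝ) (u : Fin d → ℝ) :
    f (u j) = ∏ i, (if i = j then f else fun _ => (1:ℝ)) (u i) := by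
  rw [Finset.prod_eq_single j (fun i _ hij => by simp [hij]) (by simp)]
  simp

lemma two_coord_repr {d : ℕ} {j k : Fin d} (hjk : j ≠ k) (f g : ℝ → ℝ) (u : Fin d → ℝ) :
    f (u j) * g (u k)
      = ∏ i, (if i = j then f else if i = k then g else fun _ => (1:ℝ)) (u i) := by
  rw [← Finset.mul_prod_erase Finset.univ _ (Finset.mem_univ j)]
  rw [← Finset.mul_prod_erase (Finset.univ.erase j) _
    (Finset.mem_erase.mpr ⟨hjk.symm, Finset.mem_univ k⟩)]
  rw [Finset.prod_eq_one (fun i hi => ?_)]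
  · have h1 : ¬ (k = j) := hjk.symm
    simp [h1]
  · have h1 : i ≠ k := (Finset.mem_erase.mp hi).1
    have h2 : i ≠ j := (Finset.mem_erase.mp (Finset.mem_erase.mp hi).2).1
    simp [h1, h2]

section Coord
variable {d : ℕ} (ν : Measure ℝ) [IsProbabilityMeasure ν]

lemma pi_coord_one_integrable {f : ℝ → ℝ} (hf : Integrable f ν) (j : Fin d) :
    Integrable (fun u : Fin d → ℝ => f (u j)) (Measure.pi fun _ => ν) := by
  have := pi_integrable_prod (d := d) ν
    (f := fun i => if i = j then f else fun _ => (1:ℝ))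
    (fun i => by split <;> simp_all [integrable_const])
  exact this.congr (Filter.Eventually.of_forall fun u => (single_coord_repr j f u).symm)

lemma pi_coord_one_integral (f : ℝ → ℝ) (j : Fin d) :
    ∫ u : Fin d → ℝ, f (u j) ∂(Measure.pi fun _ => ν) = ∫ x, f x ∂ν := by
  have h := pi_integral_prod (d := d) ν
    (f := fun i => if i = j then f else fun _ => (1:ℝ))
  simp only [← single_coord_repr] at h
  rw [h, Finset.prod_eq_single j (fun i _ hij => by simp [hij]) (by simp)]
  simp

lemma pi_coord_two_integrable {f g : ℝ → ℝ} (hf : Integrable f ν) (hg : Integrable g ν)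
    {j k : Fin d} (hjk : j ≠ k) :
    Integrable (fun u : Fin d → ℝ => f (u j) * g (u k)) (Measure.pi fun _ => ν) := by
  have := pi_integrable_prod (d := d) ν
    (f := fun i => if i = j then f else if i = k then g else fun _ => (1:ℝ))
    (fun i => by split <;> [skip; split] <;> simp_all [integrable_const])
  exact this.congr (Filter.Eventually.of_forall fun u => (two_coord_repr hjk f g u).symm)

lemma pi_coord_two_integral (f g : ℝ → ℝ) {j k : Fin d} (hjk : j ≠ k) :
    ∫ u : Fin d → ℝ, f (u j) * g (u k) ∂(Measure.pi fun _ => ν)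
      = (∫ x, f x ∂ν) * (∫ x, g x ∂ν) := by
  have h := pi_integral_prod (d := d) ν
    (f := fun i => if i = j then f else if i = k then g else fun _ => (1:ℝ))
  simp only [← two_coord_repr hjk] at h
  rw [h, ← Finset.mul_prod_erase Finset.univ _ (Finset.mem_univ j),
    ← Finset.mul_prod_erase (Finset.univ.erase j) _
      (Finset.mem_erase.mpr ⟨hjk.symm, Finset.mem_univ k⟩),
    Finset.prod_eq_one (fun i hi => ?_)]
  · have h1 : ¬ (k = j) := hjk.symm
    simp [h1]
  · have h1 : i ≠ k := (Finset.mem_erase.mp hi).1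
    have h2 : i ≠ j := (Finset.mem_erase.mp (Finset.mem_erase.mp hi).2).1
    simp [h1, h2]

end Coord

/-! ### Euclidean space helpers -/

lemma euclid_sum_apply {m : ℕ} {ι : Type*} [DecidableEq ι] (s : Finset ι)
    (f : ι → EuclideanSpace ℝ (Fin m)) (i : Fin m) :
    (∑ j ∈ s, f j) i = ∑ j ∈ s, f j i := by
  induction s using Finset.induction_on with
  | empty => rfl
  | insert _ _ h ih => rw [Finset.sum_insert h, Finset.sum_insert h, ← ih]; rfl

lemma euclid_norm_sq {m : ℕ} (w : EuclideanSpace ℝ (Fin m)) : ‖w‖ ^ 2 = ∑ i, (w i) ^ 2 := by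
  rw [EuclideanSpace.norm_eq, Real.sq_sqrt (by positivity)]
  simp [sq_abs]

lemma euclid_decomp {d : ℕ} (u : EuclideanSpace ℝ (Fin d)) :
    u = ∑ j, u j • EuclideanSpace.single j 1 := by
  ext i
  rw [euclid_sum_apply]
  have : ∀ j : Fin d, (u j • EuclideanSpace.single j (1:ℝ)) i
      = u j * (EuclideanSpace.single j (1:ℝ)) i := fun j => rfl
  simp only [this, EuclideanSpace.single_apply]
  simp

lemma frobSq_nonneg {d m : ℕ} (T : EuclideanSpace ℝ (Fin d) →L[ℝ] EuclideanSpace ℝ (Fin m)) :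
    0 ≤ clmFrobeniusSq T := Finset.sum_nonneg fun _ _ => sq_nonneg _

lemma clm_apply_le_frob {d m : ℕ} (S : EuclideanSpace ℝ (Fin d) →L[ℝ] EuclideanSpace ℝ (Fin m))
    (u : EuclideanSpace ℝ (Fin d)) :
    ‖S u‖ ≤ Real.sqrt (clmFrobeniusSq S) * ‖u‖ := by
  have hdecomp : S u = ∑ j, u j • S (EuclideanSpace.single j 1) := by
    conv_lhs => rw [euclid_decomp u]
    rw [map_sum]
    simp
  have h1 : ‖S u‖ ≤ ∑ j, |u j| * ‖S (EuclideanSpace.single j 1)‖ := by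
    rw [hdecomp]
    refine (norm_sum_le _ _).trans (le_of_eq (Finset.sum_congr rfl fun j _ => ?_))
    rw [norm_smul, Real.norm_eq_abs]
  refine h1.trans ?_
  have hcs := Finset.sum_mul_sq_le_sq_mul_sq Finset.univ (fun j => |u j|)
    (fun j => ‖S (EuclideanSpace.single j 1)‖)
  have hL : (0:ℝ) ≤ ∑ j, |u j| * ‖S (EuclideanSpace.single j 1)‖ :=
    Finset.sum_nonneg fun j _ => mul_nonneg (abs_nonneg _) (norm_nonneg _)
  have hR : (0:ℝ) ≤ Real.sqrt (clmFrobeniusSq S) * ‖u‖ :=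
    mul_nonneg (Real.sqrt_nonneg _) (norm_nonneg _)
  have hsq : (∑ j, |u j| * ‖S (EuclideanSpace.single j 1)‖) ^ 2
      ≤ (Real.sqrt (clmFrobeniusSq S) * ‖u‖) ^ 2 := by
    rw [mul_pow, Real.sq_sqrt (frobSq_nonneg S)]
    refine hcs.trans (le_of_eq ?_)
    rw [euclid_norm_sq u]
    simp only [sq_abs]
    rw [clmFrobeniusSq]
    ring
  calc ∑ j, |u j| * ‖S (EuclideanSpace.single j 1)‖
      = Real.sqrt ((∑ j, |u j| * ‖S (EuclideanSpace.single j 1)‖)^2) := (Real.sqrt_sq hL).symm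
    _ ≤ Real.sqrt ((Real.sqrt (clmFrobeniusSq S) * ‖u‖)^2) := Real.sqrt_le_sqrt hsq
    _ = Real.sqrt (clmFrobeniusSq S) * ‖u‖ := Real.sqrt_sq hR

lemma taylor_remainder {d m : ℕ}
    (φ : EuclideanSpace ℝ (Fin d) → EuclideanSpace ℝ (Fin m))
    (hφ : Differentiable ℝ φ) (β : ℝ)
    (hlip : ∀ x y, Real.sqrt (clmFrobeniusSq (fderiv ℝ φ x - fderiv ℝ φ y))
      ≤ β * ‖x - y‖)
    (x δ : EuclideanSpace ℝ (Fin d)) :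
    ‖φ (x + δ) - φ x - (fderiv ℝ φ x) δ‖ ≤ β / 2 * ‖δ‖ ^ 2 := by
  set T := fderiv ℝ φ x with hT
  set f : ℝ → EuclideanSpace ℝ (Fin m) :=
    fun t => φ (x + t • δ) - φ x - t • (T δ) with hf
  set f' : ℝ → EuclideanSpace ℝ (Fin m) :=
    fun t => (fderiv ℝ φ (x + t • δ)) δ - T δ with hf'
  have hc : ∀ t : ℝ, HasDerivAt (fun t : ℝ => x + t • δ) δ t := by
    intro t
    simpa using ((hasDerivAt_id t).smul_const δ).const_add x
  have hder : ∀ t : ℝ, HasDerivAt f (f' t) t := by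
    intro t
    have h1 : HasDerivAt (fun t : ℝ => φ (x + t • δ)) ((fderiv ℝ φ (x + t • δ)) δ) t :=
      (hφ (x + t • δ)).hasFDerivAt.comp_hasDerivAt t (hc t)
    have h2 : HasDerivAt (fun t : ℝ => t • (T δ)) (T δ) t := by
      simpa using (hasDerivAt_id t).smul_const (T δ)
    exact (h1.sub_const (φ x)).sub h2
  have key := image_norm_le_of_norm_deriv_right_le_deriv_boundary
    (f := f) (f' := f') (a := 0) (b := 1)
    (fun t _ => (hder t).continuousAt.continuousWithinAt)
    (fun t _ => (hder t).hasDerivWithinAt)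
    (B := fun t => β / 2 * ‖δ‖ ^ 2 * t ^ 2) (B' := fun t => β * ‖δ‖ ^ 2 * t)
    (by simp [hf])
    (fun t => by
      have := (hasDerivAt_pow 2 t).const_mul (β / 2 * ‖δ‖ ^ 2)
      exact this.congr_deriv (by norm_num; ring))
    (fun t ht => by
      have h1 : f' t = (fderiv ℝ φ (x + t • δ) - T) δ := by
        simp [hf', ContinuousLinearMap.sub_apply]
      rw [h1]
      have h2 := clm_apply_le_frob (fderiv ℝ φ (x + t • δ) - T) δ
      have h3 := hlip (x + t • δ) x
      have h4 : ‖x + t • δ - x‖ = t * ‖δ‖ := by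
        rw [add_sub_cancel_left, norm_smul, Real.norm_eq_abs, abs_of_nonneg ht.1]
      rw [h4] at h3
      calc ‖(fderiv ℝ φ (x + t • δ) - T) δ‖
          ≤ Real.sqrt (clmFrobeniusSq (fderiv ℝ φ (x + t • δ) - T)) * ‖δ‖ := h2
        _ ≤ (β * (t * ‖δ‖)) * ‖δ‖ := by
            exact mul_le_mul_of_nonneg_right h3 (norm_nonneg _)
        _ = β * ‖δ‖ ^ 2 * t := by ring)
  have h1 := key (show (1:ℝ) ∈ Set.Icc (0:ℝ) 1 by norm_num)
  simpa [hf] using h1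

lemma pointwise_sq_bound {E : Type*} [NormedAddCommGroup E] (a b : E)
    {β G s : ℝ} (hβ : 0 ≤ β) (hG : 0 ≤ G) (hs : 0 ≤ s)
    (hr : ‖a - b‖ ≤ β / 2 * s ^ 2) (hb : ‖b‖ ≤ G * s) :
    |‖a‖ ^ 2 - ‖b‖ ^ 2| ≤ β * G * s ^ 3 + β ^ 2 / 4 * s ^ 4 := by
  have h1 : ‖a‖ ≤ ‖b‖ + ‖a - b‖ := by
    calc ‖a‖ = ‖b + (a - b)‖ := by rw [add_sub_cancel]
      _ ≤ ‖b‖ + ‖a - b‖ := norm_add_le _ _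
  have h2 : ‖b‖ ≤ ‖a‖ + ‖a - b‖ := by
    calc ‖b‖ = ‖a - (a - b)‖ := by rw [_root_.sub_sub_cancel]
      _ ≤ ‖a‖ + ‖a - b‖ := norm_sub_le _ _
  have ha0 : (0:ℝ) ≤ ‖a‖ := norm_nonneg _
  have hb0 : (0:ℝ) ≤ ‖b‖ := norm_nonneg _
  have hr0 : (0:ℝ) ≤ ‖a - b‖ := norm_nonneg _
  rw [abs_le]
  constructor <;> nlinarith [sq_nonneg (β/2 * s^2), mul_le_mul hb hr hr0 (mul_nonneg hG hs),
    sq_nonneg (‖a‖ - ‖b‖), sq_nonneg (‖a‖ + ‖b‖), mul_le_mul hr hr hr0 (by positivity : (0:ℝ) ≤ β/2*s^2)]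

theorem linearised_drift_remainder_bound {d m : ℕ} (hd : 0 < d) (hm : 0 < m)
    (φ : EuclideanSpace ℝ (Fin d) → EuclideanSpace ℝ (Fin m))
    (hφ : Differentiable ℝ φ) (β : ℝ) (hβ : 0 ≤ β)
    (hlip : ∀ x y, Real.sqrt (clmFrobeniusSq (fderiv ℝ φ x - fderiv ℝ φ y))
      ≤ β * ‖x - y‖)
    (x : EuclideanSpace ℝ (Fin d)) (σ : ℝ) (hσ : 0 < σ)
    (μ : Measure (EuclideanSpace ℝ (Fin d)))
    (hμ : μ = Measure.map (MeasurableEquiv.toLp 2 (Fin d → ℝ))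
        (Measure.pi fun _ : Fin d => gaussianReal 0 (Real.toNNReal (σ ^ 2))))
    (G : ℝ) (hG : G = Real.sqrt (clmFrobeniusSq (fderiv ℝ φ x))) :
    |(∫ δ, ‖φ (x + δ) - φ x‖ ^ 2 ∂μ) - σ ^ 2 * G ^ 2| ≤
        β * G * (∫ δ, ‖δ‖ ^ 3 ∂μ) + (β ^ 2 / 4) * (∫ δ, ‖δ‖ ^ 4 ∂μ) ∧
      (∫ δ, ‖δ‖ ^ 4 ∂μ) = d * (d + 2) * σ ^ 4 := by
  classical
  set vv : ℝ≥0 := Real.toNNReal (σ ^ 2) with hvvdef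
  have hv : vv ≠ 0 := (Real.toNNReal_pos.mpr (by positivity)).ne'
  have hvv : ((vv : ℝ≥0) : ℝ) = σ ^ 2 := Real.coe_toNNReal _ (sq_nonneg σ)
  set ν : Measure ℝ := gaussianReal 0 vv with hνdef
  set P : Measure (Fin d → ℝ) := Measure.pi fun _ : Fin d => ν with hPdef
  set e := (MeasurableEquiv.toLp 2 (Fin d → ℝ)).symm with hedef
  -- transfer of integrals from μ to P
  have htrans : ∀ g : EuclideanSpace ℝ (Fin d) → ℝ,
      ∫ δ, g δ ∂μ = ∫ u, g (e.symm u) ∂P := by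
    intro g
    rw [hμ]
    exact integral_map_equiv e.symm g
  -- one-dimensional facts
  have iν1 : Integrable (fun x : ℝ => x) ν := by
    simpa using integrable_pow_gaussian hv 1
  have iν2 : Integrable (fun x : ℝ => x ^ 2) ν := integrable_pow_gaussian hv 2
  have iν4 : Integrable (fun x : ℝ => x ^ 4) ν := integrable_pow_gaussian hv 4
  have mν1 : ∫ x, x ∂ν = 0 := gauss_moment_one hv
  have mν2 : ∫ x, x ^ 2 ∂ν = σ ^ 2 := by rw [hνdef, gauss_moment_two hv, hvv]
  have mν4 : ∫ x, x ^ 4 ∂ν = 3 * (σ ^ 2) ^ 2 := by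
    rw [hνdef, gauss_moment_four hv, hvv]
  -- cross moments over P
  have hmomLinInt : ∀ j k : Fin d,
      Integrable (fun u : Fin d → ℝ => u j * u k) P := by
    intro j k
    by_cases hjk : j = k
    · subst hjk
      exact (pi_coord_one_integrable ν iν2 j).congr
        (Filter.Eventually.of_forall fun u => pow_two (u j))
    · exact pi_coord_two_integrable ν iν1 iν1 hjk
  have hmomLin : ∀ j k : Fin d,
      ∫ u, u j * u k ∂P = if j = k then σ ^ 2 else 0 := by
    intro j k
    by_cases hjk : j = k
    · subst hjk
      rw [show (fun u : Fin d → ℝ => u j * u j) = fun u => (u j) ^ 2 by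
        funext u; rw [pow_two]]
      rw [pi_coord_one_integral ν (fun x => x ^ 2) j, mν2, if_pos rfl]
    · rw [if_neg hjk, pi_coord_two_integral ν (fun x => x) (fun x => x) hjk, mν1,
        zero_mul]
  have hmomSqInt : ∀ j k : Fin d,
      Integrable (fun u : Fin d → ℝ => (u j) ^ 2 * (u k) ^ 2) P := by
    intro j k
    by_cases hjk : j = k
    · subst hjk
      exact (pi_coord_one_integrable ν iν4 j).congr
        (Filter.Eventually.of_forall fun u => by simp; ring)
    · exact pi_coord_two_integrable ν iν2 iν2 hjk
  have hmomSq : ∀ j k : Fin d,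
      ∫ u, (u j) ^ 2 * (u k) ^ 2 ∂P
        = if j = k then 3 * (σ ^ 2) ^ 2 else (σ ^ 2) ^ 2 := by
    intro j k
    by_cases hjk : j = k
    · subst hjk
      rw [show (fun u : Fin d → ℝ => (u j) ^ 2 * (u j) ^ 2) = fun u => (u j) ^ 4 by
        funext u; ring]
      rw [pi_coord_one_integral ν (fun x => x ^ 4) j, mν4, if_pos rfl]
    · rw [if_neg hjk,
        pi_coord_two_integral ν (fun x => x ^ 2) (fun x => x ^ 2) hjk, mν2]
      ring
  -- norm representations
  have hns : ∀ u : Fin d → ℝ, ‖e.symm u‖ ^ 2 = ∑ i, (u i) ^ 2 := by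
    intro u
    rw [euclid_norm_sq]
    rfl
  have hn4 : ∀ u : Fin d → ℝ, ‖e.symm u‖ ^ 4 = ∑ j, ∑ k, (u j) ^ 2 * (u k) ^ 2 := by
    intro u
    rw [show (4:ℕ) = 2 * 2 from rfl, pow_mul, hns u, sq, Finset.sum_mul_sum]
  have hmeasN : Measurable (fun u : Fin d → ℝ => ‖e.symm u‖) :=
    measurable_norm.comp e.symm.measurable
  have I2 : Integrable (fun u : Fin d → ℝ => ‖e.symm u‖ ^ 2) P := by
    refine (integrable_finset_sum Finset.univ
      (fun j _ => pi_coord_one_integrable ν iν2 j)).congr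
      (Filter.Eventually.of_forall fun u => ?_)
    exact (hns u).symm
  have I4 : Integrable (fun u : Fin d → ℝ => ‖e.symm u‖ ^ 4) P := by
    refine (integrable_finset_sum Finset.univ
      (fun j _ => integrable_finset_sum Finset.univ (fun k _ => hmomSqInt j k))).congr
      (Filter.Eventually.of_forall fun u => ?_)
    exact (hn4 u).symm
  have V4 : ∫ u, ‖e.symm u‖ ^ 4 ∂P = d * (d + 2) * σ ^ 4 := by
    rw [integral_congr_ae (Filter.Eventually.of_forall hn4),
      integral_finset_sum _ (fun j _ =>
        integrable_finset_sum Finset.univ (fun k _ => hmomSqInt j k))]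
    have : ∀ j : Fin d, ∫ u, ∑ k, (u j) ^ 2 * (u k) ^ 2 ∂P
        = (d : ℝ) * (σ ^ 2) ^ 2 + 2 * (σ ^ 2) ^ 2 := by
      intro j
      rw [integral_finset_sum _ (fun k _ => hmomSqInt j k)]
      have : ∀ k : Fin d, ∫ u, (u j) ^ 2 * (u k) ^ 2 ∂P
          = (σ ^ 2) ^ 2 + if j = k then 2 * (σ ^ 2) ^ 2 else 0 := by
        intro k
        rw [hmomSq j k]
        by_cases hjk : j = k
        · rw [if_pos hjk, if_pos hjk]; ring
        · rw [if_neg hjk, if_neg hjk]; ring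
      rw [Finset.sum_congr rfl fun k _ => this k, Finset.sum_add_distrib,
        Finset.sum_const, Finset.sum_ite_eq Finset.univ j fun _ => 2 * (σ ^ 2) ^ 2]
      simp [Finset.card_univ]
    rw [Finset.sum_congr rfl fun j _ => this j, Finset.sum_const, Finset.card_univ]
    simp only [Fintype.card_fin, nsmul_eq_mul]
    push_cast
    ring
  have I3 : Integrable (fun u : Fin d → ℝ => ‖e.symm u‖ ^ 3) P := by
    refine ((I2.add I4).const_mul (1/2)).mono'
      ((hmeasN.pow_const 3).aestronglyMeasurable)
      (Filter.Eventually.of_forall fun u => ?_)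
    have h0 : (0:ℝ) ≤ ‖e.symm u‖ := norm_nonneg _
    rw [Real.norm_eq_abs, abs_of_nonneg (by positivity)]
    simp only [Pi.add_apply]
    nlinarith [sq_nonneg (‖e.symm u‖ * (‖e.symm u‖ - 1)), sq_nonneg (‖e.symm u‖ - 1)]
  -- the Jacobian term
  set T := fderiv ℝ φ x with hTdef
  have hGnn : 0 ≤ G := hG ▸ Real.sqrt_nonneg _
  have hG2 : G ^ 2 = clmFrobeniusSq T := by rw [hG]; exact Real.sq_sqrt (frobSq_nonneg T)
  set a : Fin m → Fin d → ℝ := fun i j => (T (EuclideanSpace.single j 1)) i with hadef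
  have hTapply : ∀ (u : Fin d → ℝ) (i : Fin m),
      (T (e.symm u)) i = ∑ j, u j * a i j := by
    intro u i
    have h1 : T (e.symm u) = ∑ j, u j • T (EuclideanSpace.single j 1) := by
      conv_lhs => rw [euclid_decomp (e.symm u)]
      rw [map_sum]
      exact Finset.sum_congr rfl fun j _ => T.map_smul _ _
    rw [h1, euclid_sum_apply]
    exact Finset.sum_congr rfl fun j _ => rfl
  have hTnormsq : ∀ u : Fin d → ℝ, ‖T (e.symm u)‖ ^ 2
      = ∑ i : Fin m, ∑ j, ∑ k, (a i j * a i k) * (u j * u k) := by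
    intro u
    rw [euclid_norm_sq]
    refine Finset.sum_congr rfl fun i _ => ?_
    rw [hTapply u i, sq, Finset.sum_mul_sum]
    exact Finset.sum_congr rfl fun j _ => Finset.sum_congr rfl fun k _ => by ring
  have IQ : Integrable (fun u : Fin d → ℝ => ‖T (e.symm u)‖ ^ 2) P := by
    refine (integrable_finset_sum Finset.univ fun i _ =>
      integrable_finset_sum Finset.univ fun j _ =>
        integrable_finset_sum Finset.univ fun k _ =>
          ((hmomLinInt j k).const_mul (a i j * a i k))).congr
      (Filter.Eventually.of_forall fun u => (hTnormsq u).symm)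
  have VQ : ∫ u, ‖T (e.symm u)‖ ^ 2 ∂P = σ ^ 2 * clmFrobeniusSq T := by
    rw [integral_congr_ae (Filter.Eventually.of_forall hTnormsq),
      integral_finset_sum _ (fun i _ => integrable_finset_sum _ (fun j _ =>
        integrable_finset_sum _ (fun k _ => (hmomLinInt j k).const_mul _)))]
    have h1 : ∀ i : Fin m, ∫ u, ∑ j, ∑ k, (a i j * a i k) * (u j * u k) ∂P
        = ∑ j, (a i j) ^ 2 * σ ^ 2 := by
      intro i
      rw [integral_finset_sum _ (fun j _ => integrable_finset_sum _
        (fun k _ => (hmomLinInt j k).const_mul _))]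
      refine Finset.sum_congr rfl fun j _ => ?_
      rw [integral_finset_sum _ (fun k _ => (hmomLinInt j k).const_mul _)]
      rw [show (∑ k, ∫ u, a i j * a i k * (u j * u k) ∂P)
          = ∑ k, if j = k then a i j * a i k * σ ^ 2 else 0 from
        Finset.sum_congr rfl fun k _ => by
          rw [integral_const_mul, hmomLin j k, mul_ite, mul_zero]]
      rw [Finset.sum_ite_eq]
      simp only [Finset.mem_univ, if_true]
      ring
    rw [Finset.sum_congr rfl fun i _ => h1 i, clmFrobeniusSq, Finset.sum_comm,
      Finset.mul_sum]
    refine Finset.sum_congr rfl fun j _ => ?_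
    rw [euclid_norm_sq (T (EuclideanSpace.single j 1)), Finset.mul_sum]
    simp only [hadef]
    exact Finset.sum_congr rfl fun i _ => by ring
  -- pointwise comparison
  have hpoint : ∀ u : Fin d → ℝ,
      |‖φ (x + e.symm u) - φ x‖ ^ 2 - ‖T (e.symm u)‖ ^ 2|
        ≤ β * G * ‖e.symm u‖ ^ 3 + β ^ 2 / 4 * ‖e.symm u‖ ^ 4 := by
    intro u
    refine pointwise_sq_bound _ _ hβ hGnn (norm_nonneg _) ?_ ?_
    · exact taylor_remainder φ hφ β hlip x (e.symm u)
    · rw [hG]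
      exact clm_apply_le_frob T (e.symm u)
  have hmeasdiff : AEStronglyMeasurable
      (fun u : Fin d → ℝ => ‖φ (x + e.symm u) - φ x‖ ^ 2 - ‖T (e.symm u)‖ ^ 2) P := by
    have h1 : Measurable (fun u : Fin d → ℝ => x + e.symm u) :=
      e.symm.measurable.const_add x
    have h2 : Measurable fun u : Fin d → ℝ => ‖φ (x + e.symm u) - φ x‖ ^ 2 :=
      (((hφ.continuous.measurable.comp h1).sub_const (φ x)).norm).pow_const 2
    have h3 : Measurable fun u : Fin d → ℝ => ‖T (e.symm u)‖ ^ 2 :=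
      ((T.continuous.measurable.comp e.symm.measurable).norm).pow_const 2
    exact (h2.sub h3).aestronglyMeasurable
  have Ibound : Integrable
      (fun u : Fin d → ℝ => β * G * ‖e.symm u‖ ^ 3 + β ^ 2 / 4 * ‖e.symm u‖ ^ 4) P :=
    (I3.const_mul _).add (I4.const_mul _)
  have Idiff : Integrable
      (fun u : Fin d → ℝ => ‖φ (x + e.symm u) - φ x‖ ^ 2 - ‖T (e.symm u)‖ ^ 2) P := by
    refine Ibound.mono' hmeasdiff (Filter.Eventually.of_forall fun u => ?_)
    rw [Real.norm_eq_abs]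
    exact hpoint u
  constructor
  · rw [htrans (fun δ => ‖φ (x + δ) - φ x‖ ^ 2), htrans (fun δ => ‖δ‖ ^ 3),
      htrans (fun δ => ‖δ‖ ^ 4)]
    have hsplit : ∫ u, ‖φ (x + e.symm u) - φ x‖ ^ 2 ∂P
        = σ ^ 2 * G ^ 2
          + ∫ u, (‖φ (x + e.symm u) - φ x‖ ^ 2 - ‖T (e.symm u)‖ ^ 2) ∂P := by
      have hrw : ∫ u, ‖φ (x + e.symm u) - φ x‖ ^ 2 ∂P
          = ∫ u, (‖T (e.symm u)‖ ^ 2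
            + (‖φ (x + e.symm u) - φ x‖ ^ 2 - ‖T (e.symm u)‖ ^ 2)) ∂P := by
        congr 1; funext u; ring
      rw [hrw, integral_add IQ Idiff, VQ, hG2]
    rw [hsplit, add_sub_cancel_left]
    calc |∫ u, (‖φ (x + e.symm u) - φ x‖ ^ 2 - ‖T (e.symm u)‖ ^ 2) ∂P|
        ≤ ∫ u, |‖φ (x + e.symm u) - φ x‖ ^ 2 - ‖T (e.symm u)‖ ^ 2| ∂P :=
          by
          simpa [Real.norm_eq_abs] using norm_integral_le_integral_norm
            (fun u : Fin d → ℝ => ‖φ (x + e.symm u) - φ x‖ ^ 2 - ‖T (e.symm u)‖ ^ 2)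
      _ ≤ ∫ u, (β * G * ‖e.symm u‖ ^ 3 + β ^ 2 / 4 * ‖e.symm u‖ ^ 4) ∂P :=
          integral_mono Idiff.abs Ibound (fun u => hpoint u)
      _ = β * G * (∫ u, ‖e.symm u‖ ^ 3 ∂P) + β ^ 2 / 4 * (∫ u, ‖e.symm u‖ ^ 4 ∂P) := by
          rw [integral_add (I3.const_mul _) (I4.const_mul _), integral_const_mul,
            integral_const_mul]
  · rw [htrans (fun δ => ‖δ‖ ^ 4)]
    exact V4
end
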